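/- For every indecision level γ ∈ [0,1), the classifier Y*_γ that abstains on the optimal indecision region Θ_γ and otherwise outputs argmax_i p_i f_i(X) achieves conditional risk P(Y*_γ ≠ Y | Y*_γ ≠ 0) = (∫_{Θ_γ^c} min(p₁f₁, p₂f₂) dμ)/(1-γ), and this value is minimal among all classifiers Ỹ taking values in {0,1,2} with P(Ỹ = 0) = γ. -/
import Mathlib


open MeasureTheory Set
open scoped Classical

/-- Conditional misclassification risk `P(h ≠ Y | h ≠ 0)` of a selective classifier
`h : 𝓧 → {0,1,2}` in the binary mixture model with priors `p₁, p₂` and class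
densities `f₁, f₂` w.r.t. `μ`. -/
noncomputable def condRisk {𝓧 : Type*} [MeasurableSpace 𝓧]
    (μ : Measure 𝓧) (f₁ f₂ : 𝓧 → ℝ) (p₁ p₂ : ℝ) (h : 𝓧 → ℕ) : ℝ :=
  ((∫ x in {x | h x = 2}, p₁ * f₁ x ∂μ) + ∫ x in {x | h x = 1}, p₂ * f₂ x ∂μ) /
    ∫ x in {x | h x ≠ 0}, (p₁ * f₁ x + p₂ * f₂ x) ∂μ

/-- Key optimality inequality. -/
lemma selective_key {𝓧 : Type*} [MeasurableSpace 𝓧] (μ : Measure 𝓧)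
    (g₁ g₂ : 𝓧 → ℝ) (hm₁ : Measurable g₁) (hm₂ : Measurable g₂)
    (h₁0 : ∀ x, 0 ≤ g₁ x) (h₂0 : ∀ x, 0 ≤ g₂ x)
    (hi₁ : Integrable g₁ μ) (hi₂ : Integrable g₂ μ)
    (γ τ : ℝ)
    (hdens : ∫ x, (g₁ x + g₂ x) ∂μ = 1)
    (Θ : Set 𝓧) (hΘm : MeasurableSet Θ)
    (hΘlb : ∀ x ∈ Θ, (1 - τ) * (g₁ x + g₂ x) ≤ min (g₁ x) (g₂ x))
    (hΘub : ∀ x ∉ Θ, min (g₁ x) (g₂ x) ≤ (1 - τ) * (g₁ x + g₂ x))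
    (hΘγ : ∫ x in Θ, (g₁ x + g₂ x) ∂μ = γ)
    (h : 𝓧 → ℕ) (hh : Measurable h) (hh2 : ∀ x, h x ≤ 2)
    (hhγ : ∫ x in {x | h x = 0}, (g₁ x + g₂ x) ∂μ = γ) :
    ∫ x in Θᶜ, min (g₁ x) (g₂ x) ∂μ ≤
      (∫ x in {x | h x = 2}, g₁ x ∂μ) + ∫ x in {x | h x = 1}, g₂ x ∂μ := by
  have hgint : Integrable (fun x => g₁ x + g₂ x) μ := hi₁.add hi₂
  set m : 𝓧 → ℝ := fun x => min (g₁ x) (g₂ x) with hm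
  have hmmeas : Measurable m := hm₁.min hm₂
  have hmint : Integrable m μ := by
    refine hi₁.mono' hmmeas.aestronglyMeasurable (Filter.Eventually.of_forall fun x => ?_)
    have h1 : 0 ≤ m x := le_min (h₁0 x) (h₂0 x)
    have h2 : m x ≤ g₁ x := min_le_left _ _
    simp [Real.norm_eq_abs, abs_of_nonneg h1, h2]
  have hS0m : MeasurableSet {x | h x = 0} := hh (measurableSet_singleton 0)
  have hS1m : MeasurableSet {x | h x = 1} := hh (measurableSet_singleton 1)
  have hS2m : MeasurableSet {x | h x = 2} := hh (measurableSet_singleton 2)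
  -- ∫_{h≠0} g = 1 - γ and ∫_{Θᶜ} g = 1 - γ
  have hSg : ∫ x in {x | h x = 0}ᶜ, (g₁ x + g₂ x) ∂μ = 1 - γ := by
    have := integral_add_compl hS0m hgint
    rw [hhγ, hdens] at this; linarith
  have hΘcg : ∫ x in Θᶜ, (g₁ x + g₂ x) ∂μ = 1 - γ := by
    have := integral_add_compl hΘm hgint
    rw [hΘγ, hdens] at this; linarith
  -- split the two sets
  have e1 : ∫ x in {x | h x = 0}ᶜ ∩ Θ, (g₁ x + g₂ x) ∂μ
      + ∫ x in {x | h x = 0}ᶜ ∩ Θᶜ, (g₁ x + g₂ x) ∂μ = 1 - γ := by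
    have := integral_inter_add_diff (f := fun x => g₁ x + g₂ x) (s := {x | h x = 0}ᶜ)
      hΘm hgint.integrableOn (μ := μ)
    rw [hSg, diff_eq] at this; exact this
  have e2 : ∫ x in Θᶜ ∩ {x | h x = 0}ᶜ, (g₁ x + g₂ x) ∂μ
      + ∫ x in Θᶜ ∩ {x | h x = 0}, (g₁ x + g₂ x) ∂μ = 1 - γ := by
    have := integral_inter_add_diff (f := fun x => g₁ x + g₂ x) (s := Θᶜ)
      hS0m.compl hgint.integrableOn (μ := μ)
    rw [hΘcg, diff_eq, compl_compl] at this; exact this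
  have ecomm : {x | h x = 0}ᶜ ∩ Θᶜ = Θᶜ ∩ {x | h x = 0}ᶜ := inter_comm _ _
  have ekey : ∫ x in {x | h x = 0}ᶜ ∩ Θ, (g₁ x + g₂ x) ∂μ
      = ∫ x in Θᶜ ∩ {x | h x = 0}, (g₁ x + g₂ x) ∂μ := by
    rw [ecomm] at e1; linarith
  -- pointwise-based integral inequalities
  have ineq1 : (1 - τ) * ∫ x in {x | h x = 0}ᶜ ∩ Θ, (g₁ x + g₂ x) ∂μ
      ≤ ∫ x in {x | h x = 0}ᶜ ∩ Θ, m x ∂μ := by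
    rw [← integral_const_mul]
    exact setIntegral_mono_on (hgint.integrableOn.const_mul _) hmint.integrableOn
      (hS0m.compl.inter hΘm) (fun x hx => hΘlb x hx.2)
  have ineq2 : ∫ x in Θᶜ ∩ {x | h x = 0}, m x ∂μ
      ≤ (1 - τ) * ∫ x in Θᶜ ∩ {x | h x = 0}, (g₁ x + g₂ x) ∂μ := by
    rw [← integral_const_mul]
    exact setIntegral_mono_on hmint.integrableOn (hgint.integrableOn.const_mul _)
      (hΘm.compl.inter hS0m) (fun x hx => hΘub x hx.1)
  -- splitting m–integrals
  have m1 : ∫ x in Θᶜ ∩ {x | h x = 0}ᶜ, m x ∂μ + ∫ x in Θᶜ ∩ {x | h x = 0}, m x ∂μ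
      = ∫ x in Θᶜ, m x ∂μ := by
    have := integral_inter_add_diff (f := m) (s := Θᶜ) hS0m.compl hmint.integrableOn (μ := μ)
    rw [diff_eq, compl_compl] at this; exact this
  have m2 : ∫ x in {x | h x = 0}ᶜ ∩ Θ, m x ∂μ + ∫ x in {x | h x = 0}ᶜ ∩ Θᶜ, m x ∂μ
      = ∫ x in {x | h x = 0}ᶜ, m x ∂μ := by
    have := integral_inter_add_diff (f := m) (s := {x | h x = 0}ᶜ) hΘm hmint.integrableOn (μ := μ)
    rw [diff_eq] at this; exact this
  have mcomm : ∫ x in {x | h x = 0}ᶜ ∩ Θᶜ, m x ∂μ = ∫ x in Θᶜ ∩ {x | h x = 0}ᶜ, m x ∂μ := by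
    rw [ecomm]
  -- ∫_{h≠0} m = ∫_{h=1} m + ∫_{h=2} m
  have hunion : {x | h x = 0}ᶜ = {x | h x = 1} ∪ {x | h x = 2} := by
    ext x; have := hh2 x; simp only [mem_compl_iff, mem_setOf_eq, mem_union]; omega
  have hdisj : Disjoint {x : 𝓧 | h x = 1} {x | h x = 2} := by
    rw [disjoint_left]; intro x h1 h2; simp only [mem_setOf_eq] at h1 h2; omega
  have m3 : ∫ x in {x | h x = 0}ᶜ, m x ∂μ
      = ∫ x in {x | h x = 1}, m x ∂μ + ∫ x in {x | h x = 2}, m x ∂μ := by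
    rw [hunion]; exact setIntegral_union hdisj hS2m hmint.integrableOn hmint.integrableOn
  have final1 : ∫ x in {x | h x = 1}, m x ∂μ ≤ ∫ x in {x | h x = 1}, g₂ x ∂μ :=
    setIntegral_mono hmint.integrableOn hi₂.integrableOn (fun x => min_le_right _ _)
  have final2 : ∫ x in {x | h x = 2}, m x ∂μ ≤ ∫ x in {x | h x = 2}, g₁ x ∂μ :=
    setIntegral_mono hmint.integrableOn hi₁.integrableOn (fun x => min_le_left _ _)
  have chain : ∫ x in Θᶜ, m x ∂μ ≤ ∫ x in {x | h x = 0}ᶜ, m x ∂μ := by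
    rw [ekey] at ineq1
    rw [← m1, ← m2, mcomm]
    linarith
  calc ∫ x in Θᶜ, m x ∂μ ≤ ∫ x in {x | h x = 0}ᶜ, m x ∂μ := chain
    _ = ∫ x in {x | h x = 1}, m x ∂μ + ∫ x in {x | h x = 2}, m x ∂μ := m3
    _ ≤ (∫ x in {x | h x = 2}, g₁ x ∂μ) + ∫ x in {x | h x = 1}, g₂ x ∂μ := by linarith

/-- Pointwise lower bound helper. -/
lemma selective_pt_lb {τ a b : ℝ} (ha : 0 ≤ a) (hb : 0 ≤ b)
    (h : 1 - τ ≤ a / (a + b) ∧ a / (a + b) ≤ τ) : (1 - τ) * (a + b) ≤ min a b := by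
  rcases eq_or_lt_of_le (by linarith : (0:ℝ) ≤ a + b) with hs | hs
  · have ha0 : a = 0 := by linarith
    have hb0 : b = 0 := by linarith
    simp [ha0, hb0]
  · obtain ⟨h1, h2⟩ := h
    have e1 : (1 - τ) * (a + b) ≤ a := by
      have := (le_div_iff₀ hs).mp h1; linarith
    have e2 : a ≤ τ * (a + b) := by
      have := (div_le_iff₀ hs).mp h2; linarith
    exact le_min e1 (by nlinarith)

/-- Pointwise upper bound helper. -/
lemma selective_pt_ub {τ a b : ℝ} (ha : 0 ≤ a) (hb : 0 ≤ b)
    (h : a / (a + b) ≤ 1 - τ ∨ τ ≤ a / (a + b)) : min a b ≤ (1 - τ) * (a + b) := by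
  rcases eq_or_lt_of_le (by linarith : (0:ℝ) ≤ a + b) with hs | hs
  · have ha0 : a = 0 := by linarith
    have hb0 : b = 0 := by linarith
    simp [ha0, hb0]
  · rcases h with h1 | h2
    · have := (div_le_iff₀ hs).mp h1
      exact le_trans (min_le_left _ _) (by nlinarith)
    · have := (le_div_iff₀ hs).mp h2
      exact le_trans (min_le_right _ _) (by nlinarith)

theorem selective_bayes_optimal {𝓧 : Type*} [MeasurableSpace 𝓧]
    (μ : Measure 𝓧) (f₁ f₂ : 𝓧 → ℝ) (p₁ p₂ : ℝ) (γ : ℝ) (hγ : γ ∈ Ico (0 : ℝ) 1)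
    (hf₁ : Measurable f₁) (hf₂ : Measurable f₂)
    (hf₁0 : ∀ x, 0 ≤ f₁ x) (hf₂0 : ∀ x, 0 ≤ f₂ x)
    (hp₁ : 0 ≤ p₁) (hp₂ : 0 ≤ p₂) (hpsum : p₁ + p₂ = 1)
    (hf₁int : Integrable f₁ μ) (hf₂int : Integrable f₂ μ)
    (hdens : ∫ x, (p₁ * f₁ x + p₂ * f₂ x) ∂μ = 1)
    (η : 𝓧 → ℝ) (hη : ∀ x, η x = p₁ * f₁ x / (p₁ * f₁ x + p₂ * f₂ x))
    (τ : ℝ) (hτ : τ ∈ Icc (1 / 2 : ℝ) 1)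
    (M : Set 𝓧) (hMmeas : MeasurableSet M)
    (hMsub : M ⊆ {x | max (η x) (1 - η x) = τ})
    (Θ : Set 𝓧) (hΘ : Θ = {x | 1 - τ < η x ∧ η x < τ} ∪ M)
    (hΘγ : ∫ x in Θ, (p₁ * f₁ x + p₂ * f₂ x) ∂μ = γ)
    (Ystar : 𝓧 → ℕ)
    (hYstar : ∀ x, Ystar x = if x ∈ Θ then 0 else if p₂ * f₂ x ≤ p₁ * f₁ x then 1 else 2) :
    condRisk μ f₁ f₂ p₁ p₂ Ystar =
      (∫ x in Θᶜ, min (p₁ * f₁ x) (p₂ * f₂ x) ∂μ) / (1 - γ) ∧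
    ∀ h : 𝓧 → ℕ, Measurable h → (∀ x, h x ≤ 2) →
      (∫ x in {x | h x = 0}, (p₁ * f₁ x + p₂ * f₂ x) ∂μ) = γ →
      condRisk μ f₁ f₂ p₁ p₂ Ystar ≤ condRisk μ f₁ f₂ p₁ p₂ h := by
  have hg₁0 : ∀ x, 0 ≤ p₁ * f₁ x := fun x => mul_nonneg hp₁ (hf₁0 x)
  have hg₂0 : ∀ x, 0 ≤ p₂ * f₂ x := fun x => mul_nonneg hp₂ (hf₂0 x)
  have hg₁m : Measurable (fun x => p₁ * f₁ x) := hf₁.const_mul p₁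
  have hg₂m : Measurable (fun x => p₂ * f₂ x) := hf₂.const_mul p₂
  have hi₁ : Integrable (fun x => p₁ * f₁ x) μ := hf₁int.const_mul p₁
  have hi₂ : Integrable (fun x => p₂ * f₂ x) μ := hf₂int.const_mul p₂
  have hgint : Integrable (fun x => p₁ * f₁ x + p₂ * f₂ x) μ := hi₁.add hi₂
  have hmmeas : Measurable (fun x => min (p₁ * f₁ x) (p₂ * f₂ x)) := hg₁m.min hg₂m
  have hmint : Integrable (fun x => min (p₁ * f₁ x) (p₂ * f₂ x)) μ := by
    refine hi₁.mono' hmmeas.aestronglyMeasurable (Filter.Eventually.of_forall fun x => ?_)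
    have h1 : 0 ≤ min (p₁ * f₁ x) (p₂ * f₂ x) := le_min (hg₁0 x) (hg₂0 x)
    have h2 : min (p₁ * f₁ x) (p₂ * f₂ x) ≤ p₁ * f₁ x := min_le_left _ _
    simpa [Real.norm_eq_abs, abs_of_nonneg h1] using h2
  have hηm : Measurable η := by
    have he : η = fun x => p₁ * f₁ x / (p₁ * f₁ x + p₂ * f₂ x) := funext hη
    rw [he]; exact hg₁m.div (hg₁m.add hg₂m)
  have hΘm : MeasurableSet Θ := by
    rw [hΘ]
    exact ((measurableSet_lt measurable_const hηm).inter
      (measurableSet_lt hηm measurable_const)).union hMmeas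
  have h1γ : (0:ℝ) < 1 - γ := by linarith [hγ.2]
  -- pointwise facts
  have hΘlb : ∀ x ∈ Θ, (1 - τ) * (p₁ * f₁ x + p₂ * f₂ x)
      ≤ min (p₁ * f₁ x) (p₂ * f₂ x) := by
    intro x hx
    refine selective_pt_lb (hg₁0 x) (hg₂0 x) ?_
    rw [hΘ] at hx
    rcases hx with ⟨h1, h2⟩ | hxM
    · rw [hη x] at h1 h2
      exact ⟨le_of_lt h1, le_of_lt h2⟩
    · have hmax := hMsub hxM
      have h1 : η x ≤ τ := by rw [← hmax]; exact le_max_left _ _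
      have h2 : 1 - η x ≤ τ := by rw [← hmax]; exact le_max_right _ _
      rw [hη x] at h1 h2
      exact ⟨by linarith, h1⟩
  have hΘub : ∀ x ∉ Θ, min (p₁ * f₁ x) (p₂ * f₂ x)
      ≤ (1 - τ) * (p₁ * f₁ x + p₂ * f₂ x) := by
    intro x hx
    refine selective_pt_ub (hg₁0 x) (hg₂0 x) ?_
    have hx' : ¬(1 - τ < η x ∧ η x < τ) := fun hc => hx (by rw [hΘ]; exact Or.inl hc)
    rw [hη x] at hx'
    rcases not_and_or.mp hx' with h1 | h2
    · push_neg at h1; exact Or.inl (by linarith)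
    · push_neg at h2; exact Or.inr h2
  -- sets of Ystar
  have hS0 : {x | Ystar x ≠ 0} = Θᶜ := by
    ext x
    simp only [mem_setOf_eq, hYstar x, mem_compl_iff]
    split_ifs with h1 h2 <;> simp [h1]
  have hAm : MeasurableSet {x | p₂ * f₂ x ≤ p₁ * f₁ x} := measurableSet_le hg₂m hg₁m
  have hS1 : {x | Ystar x = 1} = Θᶜ ∩ {x | p₂ * f₂ x ≤ p₁ * f₁ x} := by
    ext x
    simp only [mem_setOf_eq, hYstar x, mem_inter_iff, mem_compl_iff]
    split_ifs with h1 h2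
    · simp [h1]
    · simp [h1, h2]
    · simp [h1, h2]
  have hS2 : {x | Ystar x = 2} = Θᶜ \ {x | p₂ * f₂ x ≤ p₁ * f₁ x} := by
    ext x
    simp only [mem_setOf_eq, hYstar x, mem_diff, mem_compl_iff]
    split_ifs with h1 h2
    · simp [h1]
    · simp [h1, h2]
    · simp [h1, h2]
  -- denominator of Ystar
  have hDen : ∫ x in Θᶜ, (p₁ * f₁ x + p₂ * f₂ x) ∂μ = 1 - γ := by
    have := integral_add_compl hΘm hgint
    rw [hΘγ, hdens] at this; linarith
  -- numerator of Ystar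
  have c2 : ∫ x in {x | Ystar x = 2}, p₁ * f₁ x ∂μ
      = ∫ x in Θᶜ \ {x | p₂ * f₂ x ≤ p₁ * f₁ x}, min (p₁ * f₁ x) (p₂ * f₂ x) ∂μ := by
    rw [hS2]
    exact setIntegral_congr_fun (hΘm.compl.diff hAm)
      (fun x hx => (min_eq_left (le_of_lt (not_le.mp hx.2))).symm)
  have c1 : ∫ x in {x | Ystar x = 1}, p₂ * f₂ x ∂μ
      = ∫ x in Θᶜ ∩ {x | p₂ * f₂ x ≤ p₁ * f₁ x}, min (p₁ * f₁ x) (p₂ * f₂ x) ∂μ := by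
    rw [hS1]
    exact setIntegral_congr_fun (hΘm.compl.inter hAm)
      (fun x hx => (min_eq_right hx.2).symm)
  have hNum : (∫ x in {x | Ystar x = 2}, p₁ * f₁ x ∂μ)
      + ∫ x in {x | Ystar x = 1}, p₂ * f₂ x ∂μ
      = ∫ x in Θᶜ, min (p₁ * f₁ x) (p₂ * f₂ x) ∂μ := by
    rw [c1, c2]
    have := integral_inter_add_diff (f := fun x => min (p₁ * f₁ x) (p₂ * f₂ x))
      (s := Θᶜ) hAm hmint.integrableOn (μ := μ)
    linarith
  have part1 : condRisk μ f₁ f₂ p₁ p₂ Ystar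
      = (∫ x in Θᶜ, min (p₁ * f₁ x) (p₂ * f₂ x) ∂μ) / (1 - γ) := by
    unfold condRisk
    rw [hNum, hS0, hDen]
  refine ⟨part1, ?_⟩
  intro h hh hh2 hhγ
  rw [part1]
  have hcompl : {x | h x ≠ 0} = {x | h x = 0}ᶜ := rfl
  have hden2 : ∫ x in {x | h x ≠ 0}, (p₁ * f₁ x + p₂ * f₂ x) ∂μ = 1 - γ := by
    rw [hcompl]
    have hS0m : MeasurableSet {x : 𝓧 | h x = 0} := hh (measurableSet_singleton 0)
    have := integral_add_compl hS0m hgint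
    rw [hhγ, hdens] at this; linarith
  unfold condRisk
  rw [hden2]
  have key := selective_key μ (fun x => p₁ * f₁ x) (fun x => p₂ * f₂ x)
    hg₁m hg₂m hg₁0 hg₂0 hi₁ hi₂ γ τ hdens Θ hΘm hΘlb hΘub hΘγ h hh hh2 hhγ
  exact (div_le_div_iff_of_pos_right h1γ).mpr key
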